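/- There exist a constant c > 0 and an integer N such that for all integers n, m ≥ N and every integer k with 1 ≤ k < m/2, the zero-error randomized query complexity satisfies R0(h_{k,n,m}) ≥ c·n·m. -/

import Mathlib

open Classical
open scoped ENNReal

set_option maxHeartbeats 1000000

/-! ### Deterministic decision trees -/

inductive DTree (ι σ : Type) : Type
  | leaf (b : Bool) : DTree ι σ
  | node (v : ι) (child : σ → DTree ι σ) : DTree ι σ

namespace DTree

variable {ι σ : Type}

/-- The output of the decision tree on input `x`. -/
def eval (x : ι → σ) : DTree ι σ → Bool
  | leaf b => b
  | node v child => (child (x v)).eval x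

/-- The list of variables queried by the decision tree on input `x`,
in the order they are queried. -/
def queryList (x : ι → σ) : DTree ι σ → List ι
  | leaf _ => []
  | node v child => v :: (child (x v)).queryList x

/-- The cost of the decision tree on input `x`: the number of internal nodes visited. -/
def cost (T : DTree ι σ) (x : ι → σ) : ℕ := (T.queryList x).length

/-- `T` computes `f` if it outputs `f x` on every input `x`. -/
def Computes (T : DTree ι σ) (f : (ι → σ) → Bool) : Prop := ∀ x, T.eval x = f x

end DTree

/-- Deterministic query complexity. -/
noncomputable def detComplexity {ι σ : Type} (f : (ι → σ) → Bool) : ℕ :=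
  sInf {d : ℕ | ∃ T : DTree ι σ, T.Computes f ∧ ∀ x, T.cost x ≤ d}

/-- Expected cost of a randomized decision tree (a distribution over deterministic
decision trees) on input `x`. -/
noncomputable def expCost {ι σ : Type} (μ : PMF (DTree ι σ)) (x : ι → σ) : ℝ≥0∞ :=
  ∑' T : DTree ι σ, μ T * (T.cost x : ℝ≥0∞)

/-- Zero-error (Las Vegas) randomized query complexity. -/
noncomputable def R0query {ι σ : Type} (f : (ι → σ) → Bool) : ℝ≥0∞ :=
  ⨅ μ ∈ {μ : PMF (DTree ι σ) | ∀ T ∈ μ.support, T.Computes f},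
    ⨆ x : ι → σ, expCost μ x

/-- One-sided error randomized query complexity. -/
noncomputable def R1query {ι σ : Type} (f : (ι → σ) → Bool) : ℝ≥0∞ :=
  ⨅ μ ∈ {μ : PMF (DTree ι σ) |
      (∀ x, f x = false → ∀ T ∈ μ.support, T.eval x = false) ∧
      (∀ x, f x = true → 1 / 2 ≤ ∑' T : DTree ι σ, if T.eval x = true then μ T else 0)},
    ⨆ x : ι → σ, expCost μ x

/-- Bounded-error (Monte Carlo) randomized query complexity. -/
noncomputable def Rquery {ι σ : Type} (f : (ι → σ) → Bool) : ℝ≥0∞ :=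
  ⨅ μ ∈ {μ : PMF (DTree ι σ) |
      ∀ x, 9 / 10 ≤ ∑' T : DTree ι σ, if T.eval x = f x then μ T else 0},
    ⨆ x : ι → σ, expCost μ x
/-! ### Quantum query algorithms -/

/-- The standard quantum query oracle `O_x |j,p⟩|w⟩ = |j, p + x_j mod S⟩|w⟩`,
as a matrix. -/
noncomputable def qOracle {V ω : Type} [DecidableEq V] [DecidableEq ω] {S : ℕ}
    (x : V → Fin S) : Matrix (V × Fin S × ω) (V × Fin S × ω) ℂ :=
  fun r c => if r = (c.1, c.2.1 + x c.1, c.2.2) then 1 else 0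

/-- A quantum query algorithm on inputs `x : V → Fin S`, making `queries` queries, with
workspace `Fin (W+1)`, alternating the unitaries `U 0, …, U queries` with the oracle,
and measuring with the projector `P` at the end. -/
structure QAlg (V : Type) [Fintype V] [DecidableEq V] (S : ℕ) [NeZero S] where
  queries : ℕ
  W : ℕ
  init : V
  U : ℕ → Matrix (V × Fin S × Fin (W + 1)) (V × Fin S × Fin (W + 1)) ℂ
  hU : ∀ t, (U t).conjTranspose * U t = 1 ∧ U t * (U t).conjTranspose = 1
  P : Matrix (V × Fin S × Fin (W + 1)) (V × Fin S × Fin (W + 1)) ℂ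
  hP : P.conjTranspose = P ∧ P * P = P

namespace QAlg

variable {V : Type} [Fintype V] [DecidableEq V] {S : ℕ} [NeZero S]

/-- The state of the quantum algorithm after `t` steps on input `x`. -/
noncomputable def state (A : QAlg V S) (x : V → Fin S) :
    ℕ → (V × Fin S × Fin (A.W + 1) → ℂ)
  | 0 => (A.U 0).mulVec fun r => if r = (A.init, 0, 0) then 1 else 0
  | t + 1 => (A.U (t + 1)).mulVec ((qOracle x).mulVec (A.state x t))

/-- The probability that the algorithm accepts input `x`: `‖P |Ψ_x⟩‖²`. -/
noncomputable def acceptProb (A : QAlg V S) (x : V → Fin S) : ℝ :=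
  ∑ r : V × Fin S × Fin (A.W + 1), Complex.normSq (A.P.mulVec (A.state x A.queries) r)

end QAlg

/-- Bounded-error quantum query complexity (for functions over a finite input
alphabet `σ`, identified with `Fin (card σ)` via a fixed bijection). -/
noncomputable def Qquery {V σ : Type} [Fintype V] [DecidableEq V] [Fintype σ] [Nonempty σ]
    (f : (V → σ) → Bool) : ℕ :=
  letI : NeZero (Fintype.card σ) := ⟨Fintype.card_ne_zero⟩
  sInf {t : ℕ | ∃ A : QAlg V (Fintype.card σ), A.queries = t ∧
    ∀ x : V → σ,
      (f x = true → 9 / 10 ≤ A.acceptProb fun j => Fintype.equivFin σ (x j)) ∧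
      (f x = false → A.acceptProb (fun j => Fintype.equivFin σ (x j)) ≤ 1 / 10)}

/-- Exact quantum query complexity. -/
noncomputable def QEquery {V σ : Type} [Fintype V] [DecidableEq V] [Fintype σ] [Nonempty σ]
    (f : (V → σ) → Bool) : ℕ :=
  letI : NeZero (Fintype.card σ) := ⟨Fintype.card_ne_zero⟩
  sInf {t : ℕ | ∃ A : QAlg V (Fintype.card σ), A.queries = t ∧
    ∀ x : V → σ,
      (f x = true → A.acceptProb (fun j => Fintype.equivFin σ (x j)) = 1) ∧
      (f x = false → A.acceptProb (fun j => Fintype.equivFin σ (x j)) = 0)}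

/-- Approximate degree of a boolean function. -/
noncomputable def adeg {ι : Type} (F : (ι → Bool) → Bool) : ℕ :=
  sInf {d : ℕ | ∃ p : MvPolynomial ι ℝ, p.totalDegree ≤ d ∧
    ∀ y : ι → Bool, |MvPolynomial.eval (fun i => if y i then (1 : ℝ) else 0) p -
      (if F y then 1 else 0)| ≤ 1 / 10}
/-! ### The pointer functions of Göös–Pitassi–Watson type -/

/-- A symbol of the input alphabet: a boolean value, a left pointer, a right pointer,
and a back/internal pointer (to a cell or a column, depending on `β`). -/
structure PSym (n m : ℕ) (β : Type) where
  val : Bool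
  lp : Option (Fin n × Fin m)
  rp : Option (Fin n × Fin m)
  bp : Option β
deriving DecidableEq

/-- The all-ones symbol `(1,⊥,⊥,⊥)`. -/
def PSym.one (n m : ℕ) (β : Type) : PSym n m β := ⟨true, none, none, none⟩

/-- The symbol `(0,⊥,⊥,⊥)`. -/
def PSym.zero (n m : ℕ) (β : Type) : PSym n m β := ⟨false, none, none, none⟩

def PSym.equivProd (n m : ℕ) (β : Type) :
    PSym n m β ≃ Bool × Option (Fin n × Fin m) × Option (Fin n × Fin m) × Option β where
  toFun v := (v.val, v.lp, v.rp, v.bp)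
  invFun p := ⟨p.1, p.2.1, p.2.2.1, p.2.2.2⟩
  left_inv _ := rfl
  right_inv _ := rfl

instance {n m : ℕ} {β : Type} [Fintype β] : Fintype (PSym n m β) :=
  Fintype.ofEquiv _ (PSym.equivProd n m β).symm

instance {n m : ℕ} {β : Type} : Nonempty (PSym n m β) := ⟨PSym.one n m β⟩

/-- The sequence of k bits of `j`, most significant first:  the root-to-leaf path
(`false` = left, `true` = right) of the `j`-th leaf in the complete binary tree of depth `k`. -/
def bitsPath (k j : ℕ) : List Bool :=
  ((List.range k).reverse).map fun i => j.testBit i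

/-- The root-to-leaf path of the leaf labeled `j` (0-indexed) in the balanced binary tree
with `m` leaves: the complete binary tree if `m` is a power of 2, and otherwise the complete
binary tree on `2 ^ ⌊log₂ m⌋` leaves with a pair of children added to each of the
`m - 2 ^ ⌊log₂ m⌋` leftmost leaves. -/
def treePath (m j : ℕ) : List Bool :=
  if m - 2 ^ Nat.log 2 m = 0 then bitsPath (Nat.log 2 m) j
  else if j < 2 * (m - 2 ^ Nat.log 2 m) then
    bitsPath (Nat.log 2 m) (j / 2) ++ [j % 2 == 1]
  else bitsPath (Nat.log 2 m) (j - (m - 2 ^ Nat.log 2 m))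

/-- Starting at cell `a` and following the left/right pointers of `x` as prescribed by the
list `p` of moves (`false` = left pointer, `true` = right pointer); returns `none` if a
null pointer is encountered. -/
def followPath {n m : ℕ} {β : Type} (x : Fin n × Fin m → PSym n m β)
    (a : Fin n × Fin m) (p : List Bool) : Option (Fin n × Fin m) :=
  p.foldl (fun acc b => acc.bind fun c => if b then (x c).rp else (x c).lp) (some a)

/-- The conditions for `x` to be a 1-input of `f_{n,m}`, with marked column `b` and special
element `a`: (1) `b` is the unique all-1 column; (2) `a` is the unique cell of column `b`
with `x_a ≠ (1,⊥,⊥,⊥)`; (3) for every column `j ≠ b` the tree path from `a` to the leaf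
labeled `j` exists, and ends at a cell `ℓ_j` of column `j` holding a 0; (4) the back pointer
of each `ℓ_j` points to the column `b`. -/
def fCond (n m : ℕ) (x : Fin n × Fin m → PSym n m (Fin m))
    (b : Fin m) (a : Fin n × Fin m) : Prop :=
  (∀ j : Fin m, (∀ i : Fin n, (x (i, j)).val = true) ↔ j = b) ∧
  a.2 = b ∧
  (∀ i : Fin n, x (i, b) ≠ PSym.one n m (Fin m) ↔ (i, b) = a) ∧
  ∀ j : Fin m, j ≠ b →
    ∃ ℓ : Fin n × Fin m, followPath x a (treePath m j.1) = some ℓ ∧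
      ℓ.2 = j ∧ (x ℓ).val = false ∧ (x ℓ).bp = some b

/-- The pointer function `f_{n,m}`, with back pointers to the marked column. -/
noncomputable def fFun (n m : ℕ) (x : Fin n × Fin m → PSym n m (Fin m)) : Bool :=
  if ∃ b a, fCond n m x b a then true else false

/-- The conditions for `x` to be a 1-input of `g_{n,m}`, with marked column `b` and special
element `a`: (1)–(3) as for `f_{n,m}`, and (4′) the set of columns `j ≠ b` whose highlighted
zero `ℓ_j` has back pointer to `a` has size exactly `m/2`. -/
def gCond (n m : ℕ) (x : Fin n × Fin m → PSym n m (Fin n × Fin m))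
    (b : Fin m) (a : Fin n × Fin m) : Prop :=
  (∀ j : Fin m, (∀ i : Fin n, (x (i, j)).val = true) ↔ j = b) ∧
  a.2 = b ∧
  (∀ i : Fin n, x (i, b) ≠ PSym.one n m (Fin n × Fin m) ↔ (i, b) = a) ∧
  (∀ j : Fin m, j ≠ b →
    ∃ ℓ : Fin n × Fin m, followPath x a (treePath m j.1) = some ℓ ∧
      ℓ.2 = j ∧ (x ℓ).val = false) ∧
  {j : Fin m | j ≠ b ∧ ∃ ℓ : Fin n × Fin m,
      followPath x a (treePath m j.1) = some ℓ ∧ (x ℓ).bp = some a}.ncard = m / 2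

/-- The pointer function `g_{n,m}`, where exactly `m/2` of the highlighted zeroes point
back to the special element. -/
noncomputable def gFun (n m : ℕ) (x : Fin n × Fin m → PSym n m (Fin n × Fin m)) : Bool :=
  if ∃ b a, gCond n m x b a then true else false

/-- Column `j` is good in `x` (for `g_{n,m}`): `x` is a 1-input with marked column `b ≠ j`
and special element `a`, and the highlighted zero of column `j` points back to `a`. -/
def goodColumn (n m : ℕ) (x : Fin n × Fin m → PSym n m (Fin n × Fin m)) (j : Fin m) : Prop :=
  ∃ b a, gCond n m x b a ∧ j ≠ b ∧
    ∃ ℓ : Fin n × Fin m, followPath x a (treePath m j.1) = some ℓ ∧ (x ℓ).bp = some a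

/-- The conditions for `x` to be a 1-input of `h_{k,n,m}`, with marked columns `b 0,…,b (k-1)`
and special elements `a 0,…,a (k-1)`: (1) the `b s` are exactly the all-1 columns; (2) `a s` is
the unique cell of column `b s` with `x_{a s} ≠ (1,⊥,⊥,⊥)`; (3) the internal pointers of the
`a s` form a cycle and all the `a s` have equal left pointers and equal right pointers;
(4) for every non-marked column `j` the tree path from any `a s` to the leaf labeled `j`
exists and ends at a cell `ℓ_j` of column `j` holding a 0. -/
def hCond (k n m : ℕ) (x : Fin n × Fin m → PSym n m (Fin n × Fin m))
    (b : Fin k → Fin m) (a : Fin k → Fin n × Fin m) : Prop :=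
  Function.Injective b ∧
  (∀ j : Fin m, (∀ i : Fin n, (x (i, j)).val = true) ↔ ∃ s, b s = j) ∧
  (∀ s, (a s).2 = b s) ∧
  (∀ s, ∀ i : Fin n, x (i, b s) ≠ PSym.one n m (Fin n × Fin m) ↔ (i, b s) = a s) ∧
  (∀ s : Fin k, (x (a s)).bp = some (a ⟨(s.1 + 1) % k, Nat.mod_lt _ s.pos⟩)) ∧
  (∀ s t : Fin k, (x (a s)).lp = (x (a t)).lp ∧ (x (a s)).rp = (x (a t)).rp) ∧
  ∀ j : Fin m, (∀ s, b s ≠ j) → ∀ s : Fin k,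
    ∃ ℓ : Fin n × Fin m, followPath x (a s) (treePath m j.1) = some ℓ ∧
      ℓ.2 = j ∧ (x ℓ).val = false

/-- The pointer function `h_{k,n,m}` with `k` marked columns and no back pointers. -/
noncomputable def hFun (k n m : ℕ) (x : Fin n × Fin m → PSym n m (Fin n × Fin m)) : Bool :=
  if ∃ b a, hCond k n m x b a then true else false

/-- The hard input `x^ℓ`: cell `(i,j)` holds `(0,⊥,⊥,⊥)` if `i = ℓ j` and `(1,⊥,⊥,⊥)`
otherwise. -/
def xhard (n m : ℕ) (β : Type) (ℓ : Fin m → Fin n) : Fin n × Fin m → PSym n m β :=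
  fun c => if c.1 = ℓ c.2 then PSym.zero n m β else PSym.one n m β

/-- The set of (distinct) cells queried among the first `t` queries of `T` on input `x`. -/
def queriedUpTo {ι σ : Type} [DecidableEq ι] (T : DTree ι σ) (x : ι → σ) (t : ℕ) :
    Finset ι :=
  ((T.queryList x).take t).toFinset
/-! ### The progress measure for the hard distribution `x^ℓ` -/

/-- Column `j` is compromised (for the input `x^ℓ`), given the set `Q` of queried cells:
the zero cell `(ℓ j, j)` has been queried, or more than `n/2` cells of column `j` have been
queried. -/
def compromisedCol (n m : ℕ) (ℓ : Fin m → Fin n) (Q : Finset (Fin n × Fin m))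
    (j : Fin m) : Prop :=
  (ℓ j, j) ∈ Q ∨ n < 2 * (Q.filter fun c => c.2 = j).card

/-- The progress measure `I_t = A_t + (2/n)·B_t` of the decision tree `T` on the input `x^ℓ`
after `t` queries, where `A_t` is the number of compromised columns and `B_t` is the number
of queried cells lying outside compromised columns. -/
noncomputable def Imeasure (n m : ℕ)
    (T : DTree (Fin n × Fin m) (PSym n m (Fin n × Fin m))) (ℓ : Fin m → Fin n) (t : ℕ) : ℝ :=
  ({j : Fin m |
      compromisedCol n m ℓ (queriedUpTo T (xhard n m (Fin n × Fin m) ℓ) t) j}.ncard : ℝ) +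
    (2 / n) * ({c : Fin n × Fin m | c ∈ queriedUpTo T (xhard n m (Fin n × Fin m) ℓ) t ∧
      ¬ compromisedCol n m ℓ (queriedUpTo T (xhard n m (Fin n × Fin m) ℓ) t) c.2}.ncard : ℝ)
/-! ### The balanced binary tree, via root-to-node paths -/

/-- The node set of the balanced binary tree with `m` leaves: each node is identified with
the left/right path from the root to it, so the nodes are exactly the prefixes of the
root-to-leaf paths. -/
def treeNodes (m : ℕ) : Finset (List Bool) :=
  (Finset.range m).biUnion fun j => (treePath m j).inits.toFinset

/-- The leaves of the balanced binary tree with `m` leaves. -/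
def leafNodes (m : ℕ) : Finset (List Bool) :=
  (Finset.range m).image fun j => treePath m j

/-- The internal nodes of the balanced binary tree with `m` leaves. -/
def internalNodes (m : ℕ) : Finset (List Bool) :=
  treeNodes m \ leafNodes m

/-- The subtree rooted at a node `u`: all nodes of which `u` is a prefix. -/
def subtreeOf (m : ℕ) (u : List Bool) : Finset (List Bool) :=
  (treeNodes m).filter fun w => u <+: w

/-! ### The hard distribution for `h_{1,n,m}` -/

/-- A parameter quadruple `(v, π, ℓᴸ, ℓᴺ)` for the hard distribution: a bit `v`, a map `π`
from internal tree nodes to columns, and row maps `ℓᴸ, ℓᴺ` for leaves resp. internal nodes. -/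
abbrev HardQ (n m : ℕ) : Type :=
  Bool × ({u : List Bool // u ∈ internalNodes m} → Fin m) × (Fin m → Fin n) × (Fin m → Fin n)

/-- The valid parameter quadruples: `π` injective and `ℓᴸ j ≠ ℓᴺ j` for all `j`. -/
noncomputable def hardSet (n m : ℕ) : Finset (HardQ n m) :=
  Finset.univ.filter fun q => Function.Injective q.2.1 ∧ ∀ j, q.2.2.1 j ≠ q.2.2.2 j

/-- The column of the root of the tree (`none` if the tree has no internal node). -/
noncomputable def rootCol (n m : ℕ) (q : HardQ n m) : Option (Fin m) :=
  if h : ([] : List Bool) ∈ internalNodes m then some (q.2.1 ⟨[], h⟩) else none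

/-- The cell where a child node `w` of an internal node is placed: internal nodes go to
cell `(ℓᴺ (π w), π w)`, the leaf labeled `j` goes to cell `(ℓᴸ j, j)`, and the removed leaf
(the one labeled by the root's column) yields a null pointer. -/
noncomputable def childCell (n m : ℕ) (q : HardQ n m) (w : List Bool) :
    Option (Fin n × Fin m) :=
  if h : w ∈ internalNodes m then some (q.2.2.2 (q.2.1 ⟨w, h⟩), q.2.1 ⟨w, h⟩)
  else if h2 : ∃ j : Fin m, w = treePath m j.1 ∧ some j ≠ rootCol n m q then
    some (q.2.2.1 (Classical.choose h2), Classical.choose h2)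
  else none

/-- The input of the hard distribution determined by the parameter quadruple `q`:
the internal node `u` of the tree is placed at cell `(ℓᴺ (π u), π u)` with left and right
pointers to the cells of its children, value `v` and a self-loop internal pointer if `u` is
the root, and value 0 otherwise; for `j ≠ π(root)`, the leaf labeled `j` is placed at cell
`(ℓᴸ j, j)` with value 0 and null pointers; all the remaining cells hold `(1,⊥,⊥,⊥)`. -/
noncomputable def hardInput (n m : ℕ) (q : HardQ n m) :
    Fin n × Fin m → PSym n m (Fin n × Fin m) :=
  fun c =>
    if h : ∃ u : {u : List Bool // u ∈ internalNodes m}, q.2.1 u = c.2 ∧ q.2.2.2 c.2 = c.1 then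
      { val := if (Classical.choose h).1 = [] then q.1 else false
        lp := childCell n m q ((Classical.choose h).1 ++ [false])
        rp := childCell n m q ((Classical.choose h).1 ++ [true])
        bp := if (Classical.choose h).1 = [] then some c else none }
    else if some c.2 ≠ rootCol n m q ∧ c.1 = q.2.2.1 c.2 then PSym.zero n m (Fin n × Fin m)
    else PSym.one n m (Fin n × Fin m)

/-- Column `j` directly satisfies (i) or (ii): one of the cells `(ℓᴸ j, j)`, `(ℓᴺ j, j)` has
been queried, or more than half of the cells of column `j` have been queried. -/
def colBad (n m : ℕ) (q : HardQ n m) (Q : Finset (Fin n × Fin m)) (j : Fin m) : Prop :=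
  (q.2.2.1 j, j) ∈ Q ∨ (q.2.2.2 j, j) ∈ Q ∨ n < 2 * (Q.filter fun c => c.2 = j).card

/-- Column `j` is compromised: it satisfies (i) or (ii), or some ancestor `u` of `π⁻¹(j)`
in the tree is such that column `π u` satisfies (i) or (ii). -/
def compromisedCol19 (n m : ℕ) (q : HardQ n m) (Q : Finset (Fin n × Fin m))
    (j : Fin m) : Prop :=
  colBad n m q Q j ∨
  ∃ w u : {u : List Bool // u ∈ internalNodes m}, q.2.1 w = j ∧
    u.1 <+: w.1 ∧ u.1 ≠ w.1 ∧ colBad n m q Q (q.2.1 u)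

/-- The progress measure `I_t = min{A_t + (4·C0·log₂ m / n)·B_t, m/2}` of the decision tree
`D` on the hard-distribution input given by `q` after `t` queries, where `A_t` is the number
of compromised columns and `B_t` the number of queried cells outside compromised columns. -/
noncomputable def Imeasure19 (n m : ℕ) (C0 : ℝ)
    (D : DTree (Fin n × Fin m) (PSym n m (Fin n × Fin m))) (q : HardQ n m) (t : ℕ) : ℝ :=
  min
    (({j : Fin m | compromisedCol19 n m q (queriedUpTo D (hardInput n m q) t) j}.ncard : ℝ) +
      (4 * C0 * Real.logb 2 m / n) *
        ({c : Fin n × Fin m | c ∈ queriedUpTo D (hardInput n m q) t ∧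
          ¬ compromisedCol19 n m q (queriedUpTo D (hardInput n m q) t) c.2}.ncard : ℝ))
    (m / 2)
/-! ### Auxiliary decision-tree lemmas -/

lemma eval_eq_of_agree {ι σ : Type} (T : DTree ι σ) (x y : ι → σ)
    (h : ∀ v ∈ T.queryList x, y v = x v) : T.eval y = T.eval x := by
  induction T with
  | leaf b => rfl
  | node v child ih =>
      have hv : y v = x v := h v (by simp [DTree.queryList])
      simp only [DTree.eval, hv]
      exact ih _ (fun w hw => h w (by simp [DTree.queryList, hw]))

lemma sum_filter_length {n m : ℕ} (l : List (Fin n × Fin m)) :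
    ∑ j : Fin m, (l.filter fun c => c.2 = j).length = l.length := by
  induction l with
  | nil => simp
  | cons c t ih =>
      have : ∀ j : Fin m, ((c :: t).filter fun c' => c'.2 = j).length
          = (if c.2 = j then 1 else 0) + (t.filter fun c' => c'.2 = j).length := by
        intro j
        by_cases h : c.2 = j <;> simp [List.filter_cons, h, Nat.add_comm]
      simp only [this, Finset.sum_add_distrib, ih]
      simp [List.length_cons, Nat.add_comm]
lemma lemA_arith (ρ N : ℕ) (h : ρ + 1 ≤ N) :
    N + ρ * (N - ρ) ≤ 2 + 2 * ρ + (ρ + 1) * (N - (ρ + 1)) := by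
  have h1 : ρ ≤ N := le_trans (Nat.le_succ ρ) h
  zify [h, h1]
  nlinarith

lemma lemA {n m : ℕ} {σ : Type} (j : Fin m) (T : DTree (Fin n × Fin m) σ)
    (y : Fin n → (Fin n × Fin m → σ)) (R : Finset (Fin n))
    (hag : ∀ i ∈ R, ∀ i' ∈ R, ∀ c : Fin n × Fin m, c ≠ (i, j) → c ≠ (i', j) → y i c = y i' c) :
    n * (R.filter fun i => (i, j) ∈ T.queryList (y i)).card
      ≤ 2 * ∑ i ∈ R, ((T.queryList (y i)).filter fun c => c.2 = j).length
        + R.card * (n - R.card) := by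
  induction T generalizing R with
  | leaf b => simp [DTree.queryList]
  | node v child ih =>
      rcases Finset.eq_empty_or_nonempty R with hR | hR
      · simp [hR]
      by_cases hvj : v.2 = j
      · by_cases hvR : v.1 ∈ R
        · -- main case: the query can hit the zero of row v.1
          set R' := R.erase v.1 with hR'
          have hsubR : R' ⊆ R := Finset.erase_subset _ _
          have hcard : R'.card + 1 = R.card := Finset.card_erase_add_one hvR
          have hcardn : R.card ≤ n := by
            simpa using Finset.card_le_card (Finset.subset_univ R)
          have hveq : v = (v.1, j) := by
            cases v; simp at hvj ⊢; exact hvj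
          rcases Finset.eq_empty_or_nonempty R' with hR'e | ⟨i₀, hi₀⟩
          · -- R = {v.1}
            have hc0 : R'.card = 0 := by rw [hR'e]; exact Finset.card_empty
            have hRone : R.card = 1 := by omega
            have hF : (R.filter fun i => (i, j) ∈ (DTree.node v child).queryList (y i)).card
                ≤ 1 := by
              calc (R.filter fun i => (i, j) ∈ (DTree.node v child).queryList (y i)).card
                  ≤ R.card := Finset.card_filter_le _ _
                _ = 1 := hRone
            have hn1 : 1 ≤ n := v.1.pos
            have hSig : 1 ≤ ∑ i ∈ R, (((DTree.node v child).queryList (y i)).filter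
                fun c => c.2 = j).length := by
              obtain ⟨i₁, hi₁⟩ := hR
              have h1 : 1 ≤ (((DTree.node v child).queryList (y i₁)).filter
                  fun c => c.2 = j).length := by
                simp [DTree.queryList, List.filter_cons, hvj]
              exact le_trans h1 (Finset.single_le_sum
                (f := fun i => (((DTree.node v child).queryList (y i)).filter
                  fun c => c.2 = j).length) (fun i _ => Nat.zero_le _) hi₁)
            rw [hRone]
            calc n * (R.filter fun i => (i, j) ∈ (DTree.node v child).queryList (y i)).card
                ≤ n * 1 := Nat.mul_le_mul_left _ hF
              _ = n := Nat.mul_one n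
              _ ≤ 2 * ∑ i ∈ R, (((DTree.node v child).queryList (y i)).filter
                    fun c => c.2 = j).length + 1 * (n - 1) := by omega
          · have hi₀R : i₀ ∈ R := hsubR hi₀
            have hi₀ne : i₀ ≠ v.1 := (Finset.mem_erase.mp hi₀).1
            set s := y i₀ v with hs_def
            have hne' : ∀ i : Fin n, i ≠ v.1 → v ≠ (i, j) := by
              intro i hine h
              apply hine
              rw [hveq] at h
              exact (congrArg Prod.fst h).symm
            have hs : ∀ i ∈ R', y i v = s := by
              intro i hi
              have hine : i ≠ v.1 := (Finset.mem_erase.mp hi).1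
              exact hag i (hsubR hi) i₀ hi₀R v (hne' i hine) (hne' i₀ hi₀ne)
            have hag' : ∀ i ∈ R', ∀ i' ∈ R', ∀ c : Fin n × Fin m,
                c ≠ (i, j) → c ≠ (i', j) → y i c = y i' c :=
              fun i hi i' hi' c h1 h2 => hag i (hsubR hi) i' (hsubR hi') c h1 h2
            -- rewrite the filter
            have hfilter : (R.filter fun i => (i, j) ∈ (DTree.node v child).queryList (y i))
                = insert v.1 (R'.filter fun i => (i, j) ∈ (child s).queryList (y i)) := by
              ext i
              simp only [Finset.mem_filter, Finset.mem_insert, Finset.mem_erase, hR',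
                DTree.queryList, List.mem_cons]
              constructor
              · rintro ⟨hiR, h⟩
                by_cases hiv : i = v.1
                · exact Or.inl hiv
                · refine Or.inr ⟨⟨hiv, hiR⟩, ?_⟩
                  rcases h with h | h
                  · exfalso; rw [hveq] at h; exact hiv (congrArg Prod.fst h)
                  · rwa [hs i (Finset.mem_erase.mpr ⟨hiv, hiR⟩)] at h
              · rintro (hiv | ⟨⟨hine, hiR⟩, h⟩)
                · subst hiv
                  exact ⟨hvR, Or.inl hveq.symm⟩
                · refine ⟨hiR, Or.inr ?_⟩
                  rwa [hs i (Finset.mem_erase.mpr ⟨hine, hiR⟩)]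
            have hnotmem : v.1 ∉ (R'.filter fun i => (i, j) ∈ (child s).queryList (y i)) := by
              intro h
              exact (Finset.mem_erase.mp (Finset.filter_subset _ _ h)).1 rfl
            have hcardF : (R.filter fun i => (i, j) ∈ (DTree.node v child).queryList (y i)).card
                = (R'.filter fun i => (i, j) ∈ (child s).queryList (y i)).card + 1 := by
              rw [hfilter, Finset.card_insert_of_notMem hnotmem]
            -- rewrite the sum
            have hsum : ∑ i ∈ R, (((DTree.node v child).queryList (y i)).filter
                  fun c => c.2 = j).length
                = (((child (y v.1 v)).queryList (y v.1)).filter fun c => c.2 = j).length + 1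
                  + ∑ i ∈ R', ((((child s).queryList (y i)).filter fun c => c.2 = j).length + 1) := by
              rw [← Finset.sum_erase_add _ _ hvR, ← hR']
              have h1 : ∀ i ∈ R', (((DTree.node v child).queryList (y i)).filter
                    fun c => c.2 = j).length
                  = (((child s).queryList (y i)).filter fun c => c.2 = j).length + 1 := by
                intro i hi
                simp [DTree.queryList, List.filter_cons, hvj, hs i hi, Nat.add_comm]
              rw [Finset.sum_congr rfl h1]
              simp [DTree.queryList, List.filter_cons, hvj]
              ring
            rw [hcardF, hsum, Finset.sum_add_distrib, Finset.sum_const, smul_eq_mul,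
              mul_one, Nat.mul_add, Nat.mul_one, ← hcard]
            have hIH := ih s R' hag'
            have harith := lemA_arith R'.card n (by omega)
            linarith
        · -- v.2 = j but row v.1 not alive: nobody hits here
          obtain ⟨i₀, hi₀⟩ := hR
          have hveq : v = (v.1, j) := by
            cases v; simp at hvj ⊢; exact hvj
          have hne : ∀ i ∈ R, v ≠ (i, j) := by
            intro i hi h
            rw [hveq] at h
            have : v.1 = i := congrArg Prod.fst h
            rw [this] at hvR; exact hvR hi
          set s := y i₀ v with hs_def
          have hs : ∀ i ∈ R, y i v = s :=
            fun i hi => hag i hi i₀ hi₀ v (hne i hi) (hne i₀ hi₀)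
          have hfilter : (R.filter fun i => (i, j) ∈ (DTree.node v child).queryList (y i))
              = R.filter fun i => (i, j) ∈ (child s).queryList (y i) := by
            apply Finset.filter_congr
            intro i hi
            simp only [DTree.queryList, List.mem_cons, hs i hi, eq_iff_iff]
            constructor
            · rintro (h | h)
              · exact absurd h.symm (hne i hi)
              · exact h
            · exact fun h => Or.inr h
          have hsum : ∑ i ∈ R, (((DTree.node v child).queryList (y i)).filter
                fun c => c.2 = j).length
              = ∑ i ∈ R, ((((child s).queryList (y i)).filter fun c => c.2 = j).length + 1) := by
            apply Finset.sum_congr rfl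
            intro i hi
            simp [DTree.queryList, List.filter_cons, hvj, hs i hi]
          rw [hfilter, hsum, Finset.sum_add_distrib, Finset.sum_const, smul_eq_mul, mul_one]
          have hIH := ih s R hag
          linarith
      · -- query in a different column
        obtain ⟨i₀, hi₀⟩ := hR
        have hne : ∀ i : Fin n, v ≠ (i, j) := by
          intro i h
          exact hvj (congrArg Prod.snd h)
        set s := y i₀ v with hs_def
        have hs : ∀ i ∈ R, y i v = s :=
          fun i hi => hag i hi i₀ hi₀ v (hne i) (hne i₀)
        have hfilter : (R.filter fun i => (i, j) ∈ (DTree.node v child).queryList (y i))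
            = R.filter fun i => (i, j) ∈ (child s).queryList (y i) := by
          apply Finset.filter_congr
          intro i hi
          simp only [DTree.queryList, List.mem_cons, hs i hi, eq_iff_iff]
          constructor
          · rintro (h | h)
            · exact absurd h.symm (hne i)
            · exact h
          · exact fun h => Or.inr h
        have hsum : ∑ i ∈ R, (((DTree.node v child).queryList (y i)).filter
              fun c => c.2 = j).length
            = ∑ i ∈ R, (((child s).queryList (y i)).filter fun c => c.2 = j).length := by
          apply Finset.sum_congr rfl
          intro i hi
          simp [DTree.queryList, List.filter_cons, hvj, hs i hi]
        rw [hfilter, hsum]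
        exact ih s R hag
/-! ### Facts about `bitsPath` and `treePath` -/

lemma bitsPath_length (k j : ℕ) : (bitsPath k j).length = k := by
  simp [bitsPath]

lemma bitsPath_inj {k a b : ℕ} (ha : a < 2 ^ k) (hb : b < 2 ^ k)
    (h : bitsPath k a = bitsPath k b) : a = b := by
  apply Nat.eq_of_testBit_eq
  intro i
  by_cases hik : i < k
  · have hmem : i ∈ (List.range k).reverse := by
      simp [List.mem_reverse, List.mem_range, hik]
    exact List.map_inj_left.mp h i hmem
  · have h1 : a < 2 ^ i := lt_of_lt_of_le ha (Nat.pow_le_pow_right (by norm_num) (by omega))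
    have h2 : b < 2 ^ i := lt_of_lt_of_le hb (Nat.pow_le_pow_right (by norm_num) (by omega))
    rw [Nat.testBit_lt_two_pow h1, Nat.testBit_lt_two_pow h2]

lemma treePath_length {m : ℕ} (j : ℕ) :
    (treePath m j).length = Nat.log 2 m ∨ (treePath m j).length = Nat.log 2 m + 1 := by
  unfold treePath
  split_ifs with h1 h2
  · exact Or.inl (bitsPath_length _ _)
  · right; simp [bitsPath_length]
  · exact Or.inl (bitsPath_length _ _)

lemma treePath_length_le {m : ℕ} (j : ℕ) :
    (treePath m j).length ≤ Nat.log 2 m + 1 := by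
  rcases treePath_length (m := m) j with h | h <;> omega

lemma treePath_ne_nil {m : ℕ} (hm : 2 ≤ m) (j : ℕ) : treePath m j ≠ [] := by
  have hL : 1 ≤ Nat.log 2 m := Nat.log_pos (by norm_num) hm
  intro h
  rcases treePath_length (m := m) j with h' | h' <;> rw [h] at h' <;> simp at h' <;> omega

lemma treePath_prefix_inj {m : ℕ} (hm : 1 ≤ m) {j j' : ℕ} (hj : j < m) (hj' : j' < m)
    (h : treePath m j <+: treePath m j') : j = j' := by
  set L := Nat.log 2 m with hL
  have h2L : 2 ^ L ≤ m := Nat.pow_log_le_self 2 (by omega)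
  have hlt : m < 2 ^ (L + 1) := Nat.lt_pow_succ_log_self (by norm_num) m
  have hpow : 2 ^ (L + 1) = 2 * 2 ^ L := by ring
  set r := m - 2 ^ L with hr
  have hrlt : r < 2 ^ L := by omega
  by_cases hr0 : r = 0
  · have hm2 : m = 2 ^ L := by omega
    unfold treePath at h
    simp only [← hL, ← hr, if_pos hr0] at h
    have heq : bitsPath L j = bitsPath L j' :=
      h.eq_of_length (by rw [bitsPath_length, bitsPath_length])
    exact bitsPath_inj (by omega) (by omega) heq
  · unfold treePath at h
    simp only [← hL, ← hr, if_neg hr0] at h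
    by_cases hjl : j < 2 * r <;> by_cases hjl' : j' < 2 * r
    · -- both long
      simp only [if_pos hjl, if_pos hjl'] at h
      have heq := h.eq_of_length (by simp [bitsPath_length])
      have hlen : (bitsPath L (j / 2)).length = L := bitsPath_length _ _
      have hlen' : (bitsPath L (j' / 2)).length = L := bitsPath_length _ _
      have h1 : bitsPath L (j / 2) = bitsPath L (j' / 2) ∧ (j % 2 == 1) = (j' % 2 == 1) := by
        have := List.append_inj heq (by rw [hlen, hlen'])
        exact ⟨this.1, by simpa using this.2⟩
      have hdiv : j / 2 = j' / 2 := bitsPath_inj (by omega) (by omega) h1.1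
      have hmod : j % 2 = j' % 2 := by
        have h2 := h1.2
        rcases Nat.mod_two_eq_zero_or_one j with hh | hh <;>
          rcases Nat.mod_two_eq_zero_or_one j' with hh' | hh' <;>
            rw [hh, hh'] at h2 ⊢ <;> simp_all
      omega
    · -- j long, j' short : length L+1 vs L, impossible
      simp only [if_pos hjl, if_neg hjl'] at h
      have := h.length_le
      simp [bitsPath_length] at this
    · -- j short, j' long
      simp only [if_neg hjl, if_pos hjl'] at h
      have heq : bitsPath L (j - r) = bitsPath L (j' / 2) := by
        have h2 := List.prefix_iff_eq_take.mp h
        rw [bitsPath_length] at h2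
        rw [h2]
        exact List.take_left' (bitsPath_length _ _)
      have : j - r = j' / 2 := bitsPath_inj (by omega) (by omega) heq
      omega
    · -- both short
      simp only [if_neg hjl, if_neg hjl'] at h
      have heq : bitsPath L (j - r) = bitsPath L (j' - r) :=
        h.eq_of_length (by rw [bitsPath_length, bitsPath_length])
      have := bitsPath_inj (a := j - r) (b := j' - r) (by omega) (by omega) heq
      omega

lemma treePath_mem_treeNodes {m : ℕ} {j : ℕ} (hj : j < m) {w : List Bool}
    (hw : w <+: treePath m j) : w ∈ treeNodes m := by
  apply Finset.mem_biUnion.mpr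
  exact ⟨j, Finset.mem_range.mpr hj, by simp [List.mem_inits, hw]⟩

lemma prefix_internal {m : ℕ} (hm : 1 ≤ m) {j : ℕ} (hj : j < m) {w : List Bool}
    (hw : w <+: treePath m j) (hne : w ≠ treePath m j) : w ∈ internalNodes m := by
  rw [internalNodes, Finset.mem_sdiff]
  refine ⟨treePath_mem_treeNodes hj hw, ?_⟩
  intro hleaf
  rw [leafNodes, Finset.mem_image] at hleaf
  obtain ⟨j', hj', hwj'⟩ := hleaf
  rw [Finset.mem_range] at hj'
  have : j' = j := treePath_prefix_inj hm hj' hj (hwj' ▸ hw)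
  rw [← this, hwj'] at hne
  exact hne rfl

/-! ### Cardinality bound for internal nodes -/

def encL : List Bool → ℕ
  | [] => 1
  | b :: t => 2 * encL t + (if b then 1 else 0)

lemma encL_pos (w : List Bool) : 1 ≤ encL w := by
  cases w with
  | nil => simp [encL]
  | cons b t => simp [encL]; cases b <;> simp <;> have := encL_pos t <;> omega

lemma encL_lt (w : List Bool) : encL w < 2 ^ (w.length + 1) := by
  induction w with
  | nil => simp [encL]
  | cons b t ih =>
      simp only [encL, List.length_cons]
      have : 2 ^ (t.length + 1 + 1) = 2 * 2 ^ (t.length + 1) := by ring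
      rw [this]
      cases b <;> simp <;> omega

lemma encL_inj : Function.Injective encL := by
  intro w w' h
  induction w generalizing w' with
  | nil =>
      cases w' with
      | nil => rfl
      | cons b t =>
          exfalso
          simp only [encL] at h
          have := encL_pos t
          cases b <;> simp at h <;> omega
  | cons b t ih =>
      cases w' with
      | nil =>
          exfalso
          simp only [encL] at h
          have := encL_pos t
          cases b <;> simp at h <;> omega
      | cons b' t' =>
          simp only [encL] at h
          have hb : b = b' := by
            cases b <;> cases b' <;> simp at h ⊢ <;> omega
          subst hb
          have ht : encL t = encL t' := by cases b <;> simp at h <;> omega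
          rw [ih ht]

lemma length_le_of_internal {m : ℕ} (hm : 1 ≤ m) {w : List Bool}
    (hw : w ∈ internalNodes m) : w.length ≤ Nat.log 2 m := by
  rw [internalNodes, Finset.mem_sdiff] at hw
  obtain ⟨htree, hleaf⟩ := hw
  rw [treeNodes, Finset.mem_biUnion] at htree
  obtain ⟨j, hj, hwj⟩ := htree
  rw [Finset.mem_range] at hj
  rw [List.mem_toFinset, List.mem_inits] at hwj
  have hle : w.length ≤ (treePath m j).length := hwj.length_le
  have hlen := treePath_length_le (m := m) j
  by_cases hl : w.length = (treePath m j).length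
  · -- w = treePath m j, contradiction with not leaf
    have : w = treePath m j := hwj.eq_of_length hl
    exfalso
    apply hleaf
    rw [leafNodes, Finset.mem_image]
    exact ⟨j, Finset.mem_range.mpr hj, this.symm⟩
  · rcases treePath_length (m := m) j with h | h <;> omega

lemma internalNodes_card_le {m : ℕ} (hm : 1 ≤ m) :
    (internalNodes m).card ≤ 2 * m := by
  have h2L : 2 ^ Nat.log 2 m ≤ m := Nat.pow_log_le_self 2 (by omega)
  have : (internalNodes m).card ≤ (Finset.range (2 ^ (Nat.log 2 m + 1))).card := by
    apply Finset.card_le_card_of_injOn encL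
    · intro w hw
      rw [Finset.coe_range, Set.mem_Iio]
      calc encL w < 2 ^ (w.length + 1) := encL_lt w
        _ ≤ 2 ^ (Nat.log 2 m + 1) :=
          Nat.pow_le_pow_right (by norm_num) (by have := length_le_of_internal hm hw; omega)
    · intro a _ b _ h
      exact encL_inj h
  rw [Finset.card_range] at this
  calc (internalNodes m).card ≤ 2 ^ (Nat.log 2 m + 1) := this
    _ = 2 * 2 ^ Nat.log 2 m := by ring
    _ ≤ 2 * m := by omega
/-! ### The true-input extension construction -/

noncomputable def cellOfC (m : ℕ) {n : ℕ} (ℓ : Fin m → Fin n)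
    (ψ : List Bool → Fin n × Fin m) (w : List Bool) : Option (Fin n × Fin m) :=
  if h : ∃ j : Fin m, treePath m j.1 = w then some (ℓ h.choose, h.choose)
  else if w ∈ (internalNodes m).erase [] then some (ψ w) else none

noncomputable def yext (m k : ℕ) {n : ℕ} (ℓ : Fin m → Fin n)
    (ψ : List Bool → Fin n × Fin m) (B : Finset (Fin m)) (a : Fin k → Fin n × Fin m) :
    (Fin n × Fin m) → PSym n m (Fin n × Fin m) :=
  fun c =>
    if h1 : ∃ u, u ∈ (internalNodes m).erase [] ∧ ψ u = c then
      ⟨false, cellOfC m ℓ ψ (h1.choose ++ [false]), cellOfC m ℓ ψ (h1.choose ++ [true]), none⟩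
    else if h2 : ∃ s : Fin k, a s = c then
      ⟨true, cellOfC m ℓ ψ [false], cellOfC m ℓ ψ [true],
        some (a ⟨(h2.choose.1 + 1) % k, Nat.mod_lt _ h2.choose.pos⟩)⟩
    else if c.2 ∈ B then PSym.one n m (Fin n × Fin m)
    else if c.1 = ℓ c.2 then PSym.zero n m (Fin n × Fin m)
    else PSym.one n m (Fin n × Fin m)

lemma extension_exists {n m k : ℕ} (hn : 100 ≤ n) (hm : 100 ≤ m) (hk1 : 1 ≤ k)
    (hk2 : 2 * k < m) (ℓ : Fin m → Fin n) (Q : Finset (Fin n × Fin m))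
    (hQ : 4 * Q.card < n * m)
    (hcomp : 2 * (Finset.univ.filter fun j : Fin m =>
      (ℓ j, j) ∈ Q ∨ n < 2 * (Q.filter fun c => c.2 = j).card).card < m) :
    ∃ y : Fin n × Fin m → PSym n m (Fin n × Fin m),
      (∀ c ∈ Q, y c = xhard n m (Fin n × Fin m) ℓ c) ∧ hFun k n m y = true := by
  have hm1 : 1 ≤ m := by omega
  set comp := Finset.univ.filter fun j : Fin m =>
    (ℓ j, j) ∈ Q ∨ n < 2 * (Q.filter fun c => c.2 = j).card with hcompdef
  set U := (Finset.univ : Finset (Fin m)) \ comp with hUdef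
  have hUcard : U.card = m - comp.card := by
    rw [hUdef, Finset.card_sdiff_of_subset (Finset.subset_univ _)]
    simp
  have hkU : k ≤ U.card := by omega
  obtain ⟨B, hBU, hBcard⟩ := Finset.exists_subset_card_eq hkU
  -- the marked columns and special elements
  set bmap : Fin k → Fin m := fun s => (B.orderIsoOfFin hBcard s : Fin m) with hbmapdef
  have hbinj : Function.Injective bmap := by
    intro s t h
    exact (B.orderIsoOfFin hBcard).injective (Subtype.ext h)
  have hbmem : ∀ s, bmap s ∈ B := fun s => (B.orderIsoOfFin hBcard s).2
  have hbsurj : ∀ j ∈ B, ∃ s, bmap s = j := by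
    intro j hj
    refine ⟨(B.orderIsoOfFin hBcard).symm ⟨j, hj⟩, ?_⟩
    show ((B.orderIsoOfFin hBcard) ((B.orderIsoOfFin hBcard).symm ⟨j, hj⟩) : Fin m) = j
    rw [OrderIso.apply_symm_apply]
  set amap : Fin k → Fin n × Fin m := fun s => (ℓ (bmap s), bmap s) with hamapdef
  have hainj : Function.Injective amap := by
    intro s t h
    exact hbinj (congrArg Prod.snd h)
  have hBuncomp : ∀ j ∈ B, (ℓ j, j) ∉ Q ∧ 2 * (Q.filter fun c => c.2 = j).card ≤ n := by
    intro j hj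
    have := hBU hj
    rw [hUdef, Finset.mem_sdiff, hcompdef, Finset.mem_filter] at this
    push_neg at this
    obtain ⟨-, h2⟩ := this
    have h3 := h2 (Finset.mem_univ j)
    exact ⟨h3.1, by omega⟩
  -- the available cells and the injection ψ
  set I0 := (internalNodes m).erase [] with hI0def
  set Avail := Finset.univ.filter
    (fun c : Fin n × Fin m => c ∉ Q ∧ c.2 ∉ B ∧ c.1 ≠ ℓ c.2) with hAvaildef
  have hAvailcard : I0.card ≤ Avail.card := by
    have hI0le : I0.card ≤ 2 * m :=
      le_trans (Finset.card_le_card (Finset.erase_subset _ _)) (internalNodes_card_le hm1)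
    -- count the complement
    have hsplit : Avail.card + (Finset.univ.filter
        (fun c : Fin n × Fin m => ¬(c ∉ Q ∧ c.2 ∉ B ∧ c.1 ≠ ℓ c.2))).card
        = n * m := by
      rw [hAvaildef, Finset.card_filter_add_card_filter_not]
      simp [Fintype.card_prod]
    have hsub : (Finset.univ.filter
        (fun c : Fin n × Fin m => ¬(c ∉ Q ∧ c.2 ∉ B ∧ c.1 ≠ ℓ c.2)))
        ⊆ Q ∪ (Finset.univ.filter fun c : Fin n × Fin m => c.2 ∈ B)
          ∪ (Finset.univ.filter fun c : Fin n × Fin m => c.1 = ℓ c.2) := by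
      intro c hc
      rw [Finset.mem_filter] at hc
      push_neg at hc
      simp only [Finset.mem_union, Finset.mem_filter, Finset.mem_univ, true_and]
      by_cases h1 : c ∈ Q
      · exact Or.inl (Or.inl h1)
      by_cases h2 : c.2 ∈ B
      · exact Or.inl (Or.inr h2)
      · exact Or.inr (hc.2 h1 h2)
    have hBcols : (Finset.univ.filter fun c : Fin n × Fin m => c.2 ∈ B).card = n * k := by
      have : (Finset.univ.filter fun c : Fin n × Fin m => c.2 ∈ B)
          = (Finset.univ : Finset (Fin n)) ×ˢ B := by
        ext c
        simp [Finset.mem_product]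
      rw [this, Finset.card_product, hBcard]
      simp
    have hzeros : (Finset.univ.filter fun c : Fin n × Fin m => c.1 = ℓ c.2).card = m := by
      have : (Finset.univ.filter fun c : Fin n × Fin m => c.1 = ℓ c.2)
          = Finset.univ.image (fun j : Fin m => (ℓ j, j)) := by
        ext c
        simp only [Finset.mem_filter, Finset.mem_univ, true_and, Finset.mem_image]
        constructor
        · intro h
          exact ⟨c.2, Prod.ext h.symm rfl⟩
        · rintro ⟨j, rfl⟩
          rfl
      rw [this, Finset.card_image_of_injective]
      · simp
      · intro a b h
        exact congrArg Prod.snd h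
    have hcompl : (Finset.univ.filter
        (fun c : Fin n × Fin m => ¬(c ∉ Q ∧ c.2 ∉ B ∧ c.1 ≠ ℓ c.2))).card
        ≤ Q.card + n * k + m := by
      calc _ ≤ (Q ∪ (Finset.univ.filter fun c : Fin n × Fin m => c.2 ∈ B)
            ∪ (Finset.univ.filter fun c : Fin n × Fin m => c.1 = ℓ c.2)).card :=
          Finset.card_le_card hsub
        _ ≤ (Q ∪ (Finset.univ.filter fun c : Fin n × Fin m => c.2 ∈ B)).card
            + (Finset.univ.filter fun c : Fin n × Fin m => c.1 = ℓ c.2).card :=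
          Finset.card_union_le _ _
        _ ≤ Q.card + (Finset.univ.filter fun c : Fin n × Fin m => c.2 ∈ B).card
            + (Finset.univ.filter fun c : Fin n × Fin m => c.1 = ℓ c.2).card := by
          have := Finset.card_union_le Q
            (Finset.univ.filter fun c : Fin n × Fin m => c.2 ∈ B)
          omega
        _ = Q.card + n * k + m := by rw [hBcols, hzeros]
    -- numeric bound
    have e2 : 2 * (n * k) + n ≤ n * m := by
      calc 2 * (n * k) + n = n * (2 * k + 1) := by ring
        _ ≤ n * m := Nat.mul_le_mul_left n (by omega)
    have e4 : 100 * m ≤ n * m := Nat.mul_le_mul_right m hn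
    have hbig : 2 * m + (Q.card + n * k + m) ≤ n * m := by linarith
    linarith
  -- build the injection ψ
  have hd : (0 : ℕ) < n := by omega
  have hd2 : (0 : ℕ) < m := by omega
  set dflt : Fin n × Fin m := (⟨0, hd⟩, ⟨0, hd2⟩) with hdflt
  set ψ : List Bool → Fin n × Fin m := fun u =>
    if h : u ∈ I0 then (Avail.equivFin.symm (Fin.castLE hAvailcard (I0.equivFin ⟨u, h⟩)) : _)
    else dflt with hψdef
  have hψAvail : ∀ u ∈ I0, ψ u ∈ Avail := by
    intro u hu
    rw [hψdef]
    simp only [dif_pos hu]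
    exact (Avail.equivFin.symm _).2
  have hψinj : ∀ u ∈ I0, ∀ u' ∈ I0, ψ u = ψ u' → u = u' := by
    intro u hu u' hu' h
    rw [hψdef] at h
    simp only [dif_pos hu, dif_pos hu'] at h
    have h2 := Subtype.ext h
    have h3 := Avail.equivFin.symm.injective h2
    have hv : (Fin.castLE hAvailcard (I0.equivFin ⟨u, hu⟩)).val
        = (Fin.castLE hAvailcard (I0.equivFin ⟨u', hu'⟩)).val := congrArg Fin.val h3
    rw [Fin.coe_castLE, Fin.coe_castLE] at hv
    have h4 : I0.equivFin ⟨u, hu⟩ = I0.equivFin ⟨u', hu'⟩ := Fin.ext hv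
    have := I0.equivFin.injective h4
    exact congrArg Subtype.val this
  have hψspec : ∀ u ∈ I0, ψ u ∉ Q ∧ (ψ u).2 ∉ B ∧ (ψ u).1 ≠ ℓ (ψ u).2 := by
    intro u hu
    have := hψAvail u hu
    rw [hAvaildef, Finset.mem_filter] at this
    exact this.2
  -- the candidate input
  set y := yext m k ℓ ψ B amap with hydef
  -- basic value computations
  have hy_int : ∀ u ∈ I0, y (ψ u) =
      ⟨false, cellOfC m ℓ ψ (u ++ [false]), cellOfC m ℓ ψ (u ++ [true]), none⟩ := by
    intro u hu
    have h1 : ∃ u', u' ∈ I0 ∧ ψ u' = ψ u := ⟨u, hu, rfl⟩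
    rw [hydef]
    show (if h1' : ∃ u', u' ∈ I0 ∧ ψ u' = ψ u then _ else _) = _
    rw [dif_pos h1]
    have hc := h1.choose_spec
    have : h1.choose = u := hψinj _ hc.1 _ hu hc.2
    simp only [this]
  have hy_a : ∀ s : Fin k, y (amap s) =
      ⟨true, cellOfC m ℓ ψ [false], cellOfC m ℓ ψ [true],
        some (amap ⟨(s.1 + 1) % k, Nat.mod_lt _ s.pos⟩)⟩ := by
    intro s
    have h1 : ¬∃ u, u ∈ I0 ∧ ψ u = amap s := by
      rintro ⟨u, hu, he⟩
      have := (hψspec u hu).2.1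
      rw [he] at this
      exact this (hbmem s)
    have h2 : ∃ t : Fin k, amap t = amap s := ⟨s, rfl⟩
    rw [hydef]
    show (if h1' : ∃ u, u ∈ I0 ∧ ψ u = amap s then _
      else if h2' : ∃ t : Fin k, amap t = amap s then _ else _) = _
    rw [dif_neg h1, dif_pos h2]
    have hcs : h2.choose = s := hainj h2.choose_spec
    simp only [hcs]
  have hy_B : ∀ c : Fin n × Fin m, c.2 ∈ B → (¬∃ s, amap s = c) →
      y c = PSym.one n m (Fin n × Fin m) := by
    intro c hcB hca
    have h1 : ¬∃ u, u ∈ I0 ∧ ψ u = c := by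
      rintro ⟨u, hu, he⟩
      have := (hψspec u hu).2.1
      rw [he] at this
      exact this hcB
    rw [hydef]
    show (if h1' : ∃ u, u ∈ I0 ∧ ψ u = c then _
      else if h2' : ∃ t : Fin k, amap t = c then _
      else if c.2 ∈ B then _ else _) = _
    rw [dif_neg h1, dif_neg hca, if_pos hcB]
  have hy_zero : ∀ c : Fin n × Fin m, c.2 ∉ B → c.1 = ℓ c.2 →
      y c = PSym.zero n m (Fin n × Fin m) := by
    intro c hcB hcz
    have h1 : ¬∃ u, u ∈ I0 ∧ ψ u = c := by
      rintro ⟨u, hu, he⟩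
      have := (hψspec u hu).2.2
      rw [he] at this
      exact this hcz
    have h2 : ¬∃ s, amap s = c := by
      rintro ⟨s, he⟩
      apply hcB
      rw [← he]
      exact hbmem s
    rw [hydef]
    show (if h1' : ∃ u, u ∈ I0 ∧ ψ u = c then _
      else if h2' : ∃ t : Fin k, amap t = c then _
      else if c.2 ∈ B then _ else if c.1 = ℓ c.2 then _ else _) = _
    rw [dif_neg h1, dif_neg h2, if_neg hcB, if_pos hcz]
  have hy_one : ∀ c : Fin n × Fin m, c.2 ∉ B → c.1 ≠ ℓ c.2 →
      (¬∃ u, u ∈ I0 ∧ ψ u = c) → y c = PSym.one n m (Fin n × Fin m) := by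
    intro c hcB hcz h1
    have h2 : ¬∃ s, amap s = c := by
      rintro ⟨s, he⟩
      apply hcB
      rw [← he]
      exact hbmem s
    rw [hydef]
    show (if h1' : ∃ u, u ∈ I0 ∧ ψ u = c then _
      else if h2' : ∃ t : Fin k, amap t = c then _
      else if c.2 ∈ B then _ else if c.1 = ℓ c.2 then _ else _) = _
    rw [dif_neg h1, dif_neg h2, if_neg hcB, if_neg hcz]
  -- cellOfC computations
  have hcell_leaf : ∀ j : Fin m, cellOfC m ℓ ψ (treePath m j.1) = some (ℓ j, j) := by
    intro j
    have h : ∃ j' : Fin m, treePath m j'.1 = treePath m j.1 := ⟨j, rfl⟩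
    rw [cellOfC, dif_pos h]
    have hspec := h.choose_spec
    have : h.choose = j := by
      apply Fin.ext
      exact treePath_prefix_inj hm1 h.choose.isLt j.isLt (by rw [hspec])
    simp only [this]
  have hcell_int : ∀ w ∈ I0, (¬∃ j : Fin m, treePath m j.1 = w) →
      cellOfC m ℓ ψ w = some (ψ w) := by
    intro w hw hnl
    rw [cellOfC, dif_neg hnl, if_pos hw]
  -- the path lemma
  have hBnot : ∀ j : Fin m, j ∉ B → ∀ w, w <+: treePath m j.1 → w ≠ treePath m j.1 →
      (¬∃ j' : Fin m, treePath m j'.1 = w) ∧ w ∈ internalNodes m := by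
    intro j hjB w hpre hne
    constructor
    · rintro ⟨j', hj'⟩
      have : j'.1 = j.1 := treePath_prefix_inj hm1 j'.isLt j.isLt (by rw [hj']; exact hpre)
      apply hne
      rw [← hj', this]
    · exact prefix_internal hm1 j.isLt hpre hne
  have hpath : ∀ (j : Fin m), j ∉ B → ∀ s : Fin k,
      followPath y (amap s) (treePath m j.1) = some (ℓ j, j) := by
    intro j hjB s
    have hstep : ∀ (p₂ p₁ : List Bool) (c : Fin n × Fin m),
        p₁ ++ p₂ = treePath m j.1 →
        ((p₁ = [] ∧ c = amap s) ∨ (p₁ ≠ [] ∧ cellOfC m ℓ ψ p₁ = some c)) →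
        List.foldl (fun acc b => acc.bind fun cc => if b then (y cc).rp else (y cc).lp)
          (some c) p₂ = some (ℓ j, j) := by
      intro p₂
      induction p₂ with
      | nil =>
          intro p₁ c h1 h2
          rw [List.append_nil] at h1
          rcases h2 with ⟨he, -⟩ | ⟨hne, hc⟩
          · exfalso
            exact treePath_ne_nil (m := m) (by omega) j.1 (by rw [← h1, he])
          · subst h1
            rw [hcell_leaf j] at hc
            simp only [List.foldl_nil]
            exact hc.symm
      | cons b t ih =>
          intro p₁ c h1 h2
          have h1' : (p₁ ++ [b]) ++ t = treePath m j.1 := by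
            rw [← h1]; simp
          -- the pointer of the current cell is cellOfC (p₁ ++ [b])
          have hptr : (if b then (y c).rp else (y c).lp) = cellOfC m ℓ ψ (p₁ ++ [b]) := by
            rcases h2 with ⟨he, hc⟩ | ⟨hne, hc⟩
            · subst hc
              rw [hy_a s, he]
              cases b <;> rfl
            · -- p₁ is a proper nonempty prefix, so an internal node cell
              have hpre : p₁ <+: treePath m j.1 := ⟨b :: t, h1⟩
              have hnefull : p₁ ≠ treePath m j.1 := by
                intro hfull
                have := congrArg List.length h1
                rw [hfull] at this
                simp at this
              obtain ⟨hnl, hint⟩ := hBnot j hjB p₁ hpre hnefull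
              have hp₁I0 : p₁ ∈ I0 := Finset.mem_erase.mpr ⟨hne, hint⟩
              rw [hcell_int p₁ hp₁I0 hnl] at hc
              have hcψ : c = ψ p₁ := by
                injection hc.symm
              subst hcψ
              rw [hy_int p₁ hp₁I0]
              cases b <;> rfl
          -- the next cell exists
          have hnext : ∃ c', cellOfC m ℓ ψ (p₁ ++ [b]) = some c' := by
            by_cases hfull : p₁ ++ [b] = treePath m j.1
            · rw [hfull, hcell_leaf j]
              exact ⟨_, rfl⟩
            · have hpre : (p₁ ++ [b]) <+: treePath m j.1 := ⟨t, h1'⟩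
              obtain ⟨hnl, hint⟩ := hBnot j hjB (p₁ ++ [b]) hpre hfull
              have hne2 : p₁ ++ [b] ≠ [] := by simp
              exact ⟨ψ (p₁ ++ [b]), hcell_int _ (Finset.mem_erase.mpr ⟨hne2, hint⟩) hnl⟩
          obtain ⟨c', hc'⟩ := hnext
          rw [List.foldl_cons]
          have : (some c).bind (fun cc => if b then (y cc).rp else (y cc).lp) = some c' := by
            rw [Option.bind_some, hptr, hc']
          rw [this]
          exact ih (p₁ ++ [b]) c' h1' (Or.inr ⟨by simp, hc'⟩)
    exact hstep (treePath m j.1) [] (amap s) rfl (Or.inl ⟨rfl, rfl⟩)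
  -- membership in B vs bmap
  have hBiff : ∀ j : Fin m, j ∈ B ↔ ∃ s, bmap s = j := by
    intro j
    constructor
    · exact hbsurj j
    · rintro ⟨s, rfl⟩
      exact hbmem s
  -- value of the zero cells in unmarked columns
  have hzero_val : ∀ j : Fin m, j ∉ B → y (ℓ j, j) = PSym.zero n m (Fin n × Fin m) :=
    fun j hj => hy_zero (ℓ j, j) hj rfl
  refine ⟨y, ?_, ?_⟩
  · -- agreement with xhard on Q
    intro c hcQ
    have h1 : ¬∃ u, u ∈ I0 ∧ ψ u = c := by
      rintro ⟨u, hu, he⟩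
      have := (hψspec u hu).1
      rw [he] at this
      exact this hcQ
    have h2 : ¬∃ s, amap s = c := by
      rintro ⟨s, he⟩
      have := (hBuncomp (bmap s) (hbmem s)).1
      have he' : (ℓ (bmap s), bmap s) = c := he
      rw [he'] at this
      exact this hcQ
    by_cases hcB : c.2 ∈ B
    · have hcz : c.1 ≠ ℓ c.2 := by
        intro hcz
        apply h2
        obtain ⟨s, hs⟩ := hbsurj c.2 hcB
        refine ⟨s, ?_⟩
        show (ℓ (bmap s), bmap s) = c
        rw [hs]
        exact Prod.ext hcz.symm rfl
      rw [hy_B c hcB h2, xhard, if_neg hcz]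
    · by_cases hcz : c.1 = ℓ c.2
      · rw [hy_zero c hcB hcz, xhard, if_pos hcz]
      · rw [hy_one c hcB hcz h1, xhard, if_neg hcz]
  · -- hFun y = true
    have hcond : hCond k n m y bmap amap := by
      refine ⟨hbinj, ?_, ?_, ?_, ?_, ?_, ?_⟩
      · -- all-1 columns are exactly the marked ones
        intro j
        constructor
        · intro hall
          by_contra hns
          have hjB : j ∉ B := fun h => hns (hbsurj j h)
          have := hall (ℓ j)
          rw [hzero_val j hjB] at this
          simp [PSym.zero] at this
        · rintro ⟨s, rfl⟩
          intro i
          by_cases hia : (i, bmap s) = amap s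
          · rw [hia, hy_a s]
          · have h2 : ¬∃ t, amap t = (i, bmap s) := by
              rintro ⟨t, ht⟩
              have hts : t = s := hbinj (congrArg Prod.snd ht)
              rw [hts] at ht
              exact hia ht.symm
            rw [hy_B (i, bmap s) (hbmem s) h2]
            rfl
      · intro s; rfl
      · -- unique special element
        intro s i
        constructor
        · intro hne
          by_contra hia
          have h2 : ¬∃ t, amap t = (i, bmap s) := by
            rintro ⟨t, ht⟩
            have hts : t = s := hbinj (congrArg Prod.snd ht)
            rw [hts] at ht
            exact hia ht.symm
          exact hne (hy_B (i, bmap s) (hbmem s) h2)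
        · intro hia
          rw [hia, hy_a s]
          intro heq
          have := congrArg PSym.bp heq
          simp [PSym.one] at this
      · -- the pointer cycle
        intro s
        rw [hy_a s]
      · -- equal left and right pointers
        intro s t
        rw [hy_a s, hy_a t]
        exact ⟨rfl, rfl⟩
      · -- paths to the unmarked columns
        intro j hj s
        have hjB : j ∉ B := by
          intro hjB
          obtain ⟨t, ht⟩ := hbsurj j hjB
          exact hj t ht
        refine ⟨(ℓ j, j), hpath j hjB s, rfl, ?_⟩
        rw [hzero_val j hjB]
        rfl
    rw [hFun, if_pos ⟨bmap, amap, hcond⟩]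
lemma hFun_xhard_false {n m k : ℕ} (hk1 : 1 ≤ k) (ℓ : Fin m → Fin n) :
    hFun k n m (xhard n m (Fin n × Fin m) ℓ) = false := by
  rw [hFun, if_neg]
  rintro ⟨b, a, hcond⟩
  have h2 := hcond.2.1 (b ⟨0, hk1⟩)
  have h3 := (h2.mpr ⟨⟨0, hk1⟩, rfl⟩) (ℓ (b ⟨0, hk1⟩))
  rw [xhard] at h3
  simp [PSym.zero] at h3

lemma dichotomy {n m k : ℕ} (hn : 100 ≤ n) (hm : 100 ≤ m) (hk1 : 1 ≤ k) (hk2 : 2 * k < m)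
    (T : DTree (Fin n × Fin m) (PSym n m (Fin n × Fin m))) (hT : T.Computes (hFun k n m))
    (ℓ : Fin m → Fin n) :
    n * m ≤ 4 * (T.queryList (xhard n m (Fin n × Fin m) ℓ)).length ∨
    m ≤ 2 * (Finset.univ.filter fun j : Fin m =>
      (ℓ j, j) ∈ (T.queryList (xhard n m (Fin n × Fin m) ℓ)).toFinset ∨
      n < 2 * (((T.queryList (xhard n m (Fin n × Fin m) ℓ)).toFinset.filter
        fun c => c.2 = j).card)).card := by
  by_contra hcon
  push_neg at hcon
  obtain ⟨h1, h2⟩ := hcon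
  set Q := (T.queryList (xhard n m (Fin n × Fin m) ℓ)).toFinset with hQdef
  have hQcard : Q.card ≤ (T.queryList (xhard n m (Fin n × Fin m) ℓ)).length :=
    List.toFinset_card_le _
  have h4Q : 4 * Q.card < n * m := by omega
  obtain ⟨y, hagree, hytrue⟩ := extension_exists hn hm hk1 hk2 ℓ Q h4Q (by omega)
  have heval := eval_eq_of_agree T (xhard n m (Fin n × Fin m) ℓ) y
    (fun v hv => hagree v (List.mem_toFinset.mpr hv))
  rw [hT y, hT (xhard n m (Fin n × Fin m) ℓ), hytrue, hFun_xhard_false hk1 ℓ] at heval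
  exact Bool.true_eq_false.mp heval
/-! ### Aggregating the hit counts over the hard distribution -/

lemma hit_sum_bound {n m : ℕ} (T : DTree (Fin n × Fin m) (PSym n m (Fin n × Fin m)))
    (j : Fin m) :
    n * ∑ ℓ : Fin m → Fin n,
        (if (ℓ j, j) ∈ T.queryList (xhard n m (Fin n × Fin m) ℓ) then 1 else 0)
      ≤ 2 * ∑ ℓ : Fin m → Fin n, ((T.queryList (xhard n m (Fin n × Fin m) ℓ)).filter
          fun c => c.2 = j).length := by
  set e := Equiv.funSplitAt j (Fin n) with hedef
  have hsum1 : ∑ ℓ : Fin m → Fin n,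
      (if (ℓ j, j) ∈ T.queryList (xhard n m (Fin n × Fin m) ℓ) then 1 else 0)
      = ∑ p : Fin n × ({j' : Fin m // j' ≠ j} → Fin n),
        (if ((e.symm p) j, j) ∈ T.queryList (xhard n m (Fin n × Fin m) (e.symm p))
          then 1 else 0) :=
    (Equiv.sum_comp e.symm _).symm
  have hsum2 : ∑ ℓ : Fin m → Fin n, ((T.queryList (xhard n m (Fin n × Fin m) ℓ)).filter
        fun c => c.2 = j).length
      = ∑ p : Fin n × ({j' : Fin m // j' ≠ j} → Fin n),
        ((T.queryList (xhard n m (Fin n × Fin m) (e.symm p))).filter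
          fun c => c.2 = j).length :=
    (Equiv.sum_comp e.symm _).symm
  have swap : ∀ (F : Fin n × ({j' : Fin m // j' ≠ j} → Fin n) → ℕ),
      ∑ p, F p = ∑ g : {j' : Fin m // j' ≠ j} → Fin n, ∑ i : Fin n, F (i, g) := by
    intro F
    rw [Fintype.sum_prod_type]
    exact Finset.sum_comm
  rw [hsum1, hsum2, swap _, swap _, Finset.mul_sum, Finset.mul_sum]
  apply Finset.sum_le_sum
  intro g _
  -- apply the per-column lemma with y i := xhard (e.symm (i, g))
  set y : Fin n → (Fin n × Fin m → PSym n m (Fin n × Fin m)) :=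
    fun i => xhard n m (Fin n × Fin m) (e.symm (i, g)) with hydef
  have hvalj : ∀ i : Fin n, (e.symm (i, g)) j = i := by
    intro i
    simp [hedef, Equiv.funSplitAt, Equiv.piSplitAt]
  have hag : ∀ i ∈ (Finset.univ : Finset (Fin n)), ∀ i' ∈ (Finset.univ : Finset (Fin n)),
      ∀ c : Fin n × Fin m, c ≠ (i, j) → c ≠ (i', j) → y i c = y i' c := by
    intro i _ i' _ c hci hci'
    rw [hydef]
    simp only
    by_cases hcj : c.2 = j
    · have hc1 : c.1 ≠ i := by
        intro h
        exact hci (Prod.ext h hcj)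
      have hc1' : c.1 ≠ i' := by
        intro h
        exact hci' (Prod.ext h hcj)
      rw [xhard, xhard, if_neg (by rw [hcj, hvalj i]; exact hc1),
        if_neg (by rw [hcj, hvalj i']; exact hc1')]
    · have : (e.symm (i, g)) c.2 = (e.symm (i', g)) c.2 := by
        simp [hedef, Equiv.funSplitAt, Equiv.piSplitAt, hcj]
      rw [xhard, xhard, this]
  have hA := lemA j T y Finset.univ hag
  rw [Finset.card_univ, Fintype.card_fin, Nat.sub_self, Nat.mul_zero, Nat.add_zero] at hA
  have hcards : (Finset.univ.filter fun i : Fin n => (i, j) ∈ T.queryList (y i)).card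
      = ∑ i : Fin n, (if ((e.symm (i, g)) j, j) ∈ T.queryList
          (xhard n m (Fin n × Fin m) (e.symm (i, g))) then 1 else 0) := by
    rw [Finset.card_filter]
    apply Finset.sum_congr rfl
    intro i _
    congr 1
    rw [hydef]
    simp only [hvalj i]
  rw [hcards] at hA
  exact hA
/-! ### The total cost bound over the hard distribution -/

def QL {n m : ℕ} (T : DTree (Fin n × Fin m) (PSym n m (Fin n × Fin m)))
    (ℓ : Fin m → Fin n) : List (Fin n × Fin m) :=
  T.queryList (xhard n m (Fin n × Fin m) ℓ)

def compSet {n m : ℕ} (T : DTree (Fin n × Fin m) (PSym n m (Fin n × Fin m)))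
    (ℓ : Fin m → Fin n) : Finset (Fin m) :=
  Finset.univ.filter fun j => (ℓ j, j) ∈ (QL T ℓ).toFinset ∨
    n < 2 * (((QL T ℓ).toFinset.filter fun c => c.2 = j).card)

lemma filter_card_le_filter_length {n m : ℕ} (l : List (Fin n × Fin m)) (j : Fin m) :
    (l.toFinset.filter fun c => c.2 = j).card ≤ (l.filter fun c => c.2 = j).length := by
  have hsub : (l.toFinset.filter fun c => c.2 = j) ⊆ (l.filter fun c => c.2 = j).toFinset := by
    intro c hc
    rw [Finset.mem_filter, List.mem_toFinset] at hc
    rw [List.mem_toFinset, List.mem_filter]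
    exact ⟨hc.1, by simp [hc.2]⟩
  exact le_trans (Finset.card_le_card hsub) (List.toFinset_card_le _)

lemma half_bound {n m : ℕ} (T : DTree (Fin n × Fin m) (PSym n m (Fin n × Fin m)))
    (ℓ : Fin m → Fin n) :
    n * (Finset.univ.filter fun j : Fin m =>
        n < 2 * (((QL T ℓ).toFinset.filter fun c => c.2 = j).card)).card
      ≤ 2 * (QL T ℓ).length := by
  set H := Finset.univ.filter fun j : Fin m =>
    n < 2 * (((QL T ℓ).toFinset.filter fun c => c.2 = j).card) with hHdef
  calc n * H.card = ∑ _j ∈ H, n := by rw [Finset.sum_const, smul_eq_mul, Nat.mul_comm]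
    _ ≤ ∑ j ∈ H, 2 * ((QL T ℓ).filter fun c => c.2 = j).length := by
      apply Finset.sum_le_sum
      intro j hj
      rw [hHdef, Finset.mem_filter] at hj
      have := filter_card_le_filter_length (QL T ℓ) j
      omega
    _ ≤ ∑ j : Fin m, 2 * ((QL T ℓ).filter fun c => c.2 = j).length :=
      Finset.sum_le_sum_of_subset (Finset.filter_subset _ _)
    _ = 2 * ∑ j : Fin m, ((QL T ℓ).filter fun c => c.2 = j).length := by
      rw [Finset.mul_sum]
    _ = 2 * (QL T ℓ).length := by rw [sum_filter_length]

lemma hits_bound {n m : ℕ} (T : DTree (Fin n × Fin m) (PSym n m (Fin n × Fin m))) :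
    n * ∑ ℓ : Fin m → Fin n,
        (Finset.univ.filter fun j : Fin m => (ℓ j, j) ∈ (QL T ℓ).toFinset).card
      ≤ 2 * ∑ ℓ : Fin m → Fin n, (QL T ℓ).length := by
  have h1 : ∀ ℓ : Fin m → Fin n,
      (Finset.univ.filter fun j : Fin m => (ℓ j, j) ∈ (QL T ℓ).toFinset).card
      = ∑ j : Fin m, (if (ℓ j, j) ∈ QL T ℓ then 1 else 0) := by
    intro ℓ
    rw [Finset.card_filter]
    apply Finset.sum_congr rfl
    intro j _
    congr 1
    simp [List.mem_toFinset]
  calc n * ∑ ℓ : Fin m → Fin n,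
        (Finset.univ.filter fun j : Fin m => (ℓ j, j) ∈ (QL T ℓ).toFinset).card
      = n * ∑ ℓ : Fin m → Fin n, ∑ j : Fin m, (if (ℓ j, j) ∈ QL T ℓ then 1 else 0) := by
        congr 1
        exact Finset.sum_congr rfl fun ℓ _ => h1 ℓ
    _ = ∑ j : Fin m, n * ∑ ℓ : Fin m → Fin n, (if (ℓ j, j) ∈ QL T ℓ then 1 else 0) := by
        rw [Finset.sum_comm, Finset.mul_sum]
    _ ≤ ∑ j : Fin m, 2 * ∑ ℓ : Fin m → Fin n,
          ((QL T ℓ).filter fun c => c.2 = j).length := by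
        apply Finset.sum_le_sum
        intro j _
        exact hit_sum_bound T j
    _ = 2 * ∑ ℓ : Fin m → Fin n, ∑ j : Fin m,
          ((QL T ℓ).filter fun c => c.2 = j).length := by
        rw [Finset.sum_comm, Finset.mul_sum]
    _ = 2 * ∑ ℓ : Fin m → Fin n, (QL T ℓ).length := by
        congr 1
        exact Finset.sum_congr rfl fun ℓ _ => sum_filter_length _

lemma total_bound {n m k : ℕ} (hn : 100 ≤ n) (hm : 100 ≤ m) (hk1 : 1 ≤ k) (hk2 : 2 * k < m)
    (T : DTree (Fin n × Fin m) (PSym n m (Fin n × Fin m))) (hT : T.Computes (hFun k n m)) :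
    n * m * n ^ m ≤ 12 * ∑ ℓ : Fin m → Fin n, (QL T ℓ).length := by
  classical
  -- compromised columns are hits or half-queried
  have hcompsub : ∀ ℓ : Fin m → Fin n, (compSet T ℓ).card
      ≤ (Finset.univ.filter fun j : Fin m => (ℓ j, j) ∈ (QL T ℓ).toFinset).card
        + (Finset.univ.filter fun j : Fin m =>
          n < 2 * (((QL T ℓ).toFinset.filter fun c => c.2 = j).card)).card := by
    intro ℓ
    have hsub : compSet T ℓ ⊆
        (Finset.univ.filter fun j : Fin m => (ℓ j, j) ∈ (QL T ℓ).toFinset)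
        ∪ (Finset.univ.filter fun j : Fin m =>
          n < 2 * (((QL T ℓ).toFinset.filter fun c => c.2 = j).card)) := by
      intro j hj
      rw [compSet, Finset.mem_filter] at hj
      rw [Finset.mem_union, Finset.mem_filter, Finset.mem_filter]
      rcases hj.2 with h | h
      · exact Or.inl ⟨Finset.mem_univ _, h⟩
      · exact Or.inr ⟨Finset.mem_univ _, h⟩
    exact le_trans (Finset.card_le_card hsub) (Finset.card_union_le _ _)
  -- total compromised bound
  have hcomptotal : n * ∑ ℓ : Fin m → Fin n, (compSet T ℓ).card
      ≤ 4 * ∑ ℓ : Fin m → Fin n, (QL T ℓ).length := by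
    have h1 : n * ∑ ℓ : Fin m → Fin n, (compSet T ℓ).card
        ≤ n * ∑ ℓ : Fin m → Fin n,
          ((Finset.univ.filter fun j : Fin m => (ℓ j, j) ∈ (QL T ℓ).toFinset).card
            + (Finset.univ.filter fun j : Fin m =>
              n < 2 * (((QL T ℓ).toFinset.filter fun c => c.2 = j).card)).card) :=
      Nat.mul_le_mul_left n (Finset.sum_le_sum fun ℓ _ => hcompsub ℓ)
    rw [Finset.sum_add_distrib, Nat.mul_add] at h1
    have h2 := hits_bound T
    have h3 : n * ∑ ℓ : Fin m → Fin n, (Finset.univ.filter fun j : Fin m =>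
        n < 2 * (((QL T ℓ).toFinset.filter fun c => c.2 = j).card)).card
        ≤ 2 * ∑ ℓ : Fin m → Fin n, (QL T ℓ).length := by
      rw [Finset.mul_sum, Finset.mul_sum]
      exact Finset.sum_le_sum fun ℓ _ => half_bound T ℓ
    linarith
  -- split according to the dichotomy
  set S := Finset.univ.filter
    (fun ℓ : Fin m → Fin n => m ≤ 2 * (compSet T ℓ).card) with hSdef
  have hcards : S.card + (Finset.univ.filter
      (fun ℓ : Fin m → Fin n => ¬(m ≤ 2 * (compSet T ℓ).card))).card = n ^ m := by
    rw [hSdef, Finset.card_filter_add_card_filter_not]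
    simp [Fintype.card_fun]
  -- on S : many compromised columns
  have hSbound : n * (m * S.card) ≤ 8 * ∑ ℓ : Fin m → Fin n, (QL T ℓ).length := by
    have h1 : m * S.card ≤ 2 * ∑ ℓ ∈ S, (compSet T ℓ).card := by
      calc m * S.card = ∑ _ℓ ∈ S, m := by rw [Finset.sum_const, smul_eq_mul, Nat.mul_comm]
        _ ≤ ∑ ℓ ∈ S, 2 * (compSet T ℓ).card := by
          apply Finset.sum_le_sum
          intro ℓ hℓ
          rw [hSdef, Finset.mem_filter] at hℓ
          exact hℓ.2
        _ = 2 * ∑ ℓ ∈ S, (compSet T ℓ).card := by rw [Finset.mul_sum]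
    have h2 : ∑ ℓ ∈ S, (compSet T ℓ).card ≤ ∑ ℓ : Fin m → Fin n, (compSet T ℓ).card :=
      Finset.sum_le_sum_of_subset (Finset.filter_subset _ _)
    calc n * (m * S.card) ≤ n * (2 * ∑ ℓ ∈ S, (compSet T ℓ).card) :=
        Nat.mul_le_mul_left n h1
      _ ≤ n * (2 * ∑ ℓ : Fin m → Fin n, (compSet T ℓ).card) :=
        Nat.mul_le_mul_left n (Nat.mul_le_mul_left 2 h2)
      _ = 2 * (n * ∑ ℓ : Fin m → Fin n, (compSet T ℓ).card) := by ring
      _ ≤ 2 * (4 * ∑ ℓ : Fin m → Fin n, (QL T ℓ).length) :=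
        Nat.mul_le_mul_left 2 hcomptotal
      _ = 8 * ∑ ℓ : Fin m → Fin n, (QL T ℓ).length := by ring
  -- off S : large cost
  have hScbound : n * m * (Finset.univ.filter
      (fun ℓ : Fin m → Fin n => ¬(m ≤ 2 * (compSet T ℓ).card))).card
      ≤ 4 * ∑ ℓ : Fin m → Fin n, (QL T ℓ).length := by
    calc n * m * (Finset.univ.filter
        (fun ℓ : Fin m → Fin n => ¬(m ≤ 2 * (compSet T ℓ).card))).card
        = ∑ _ℓ ∈ (Finset.univ.filter
          (fun ℓ : Fin m → Fin n => ¬(m ≤ 2 * (compSet T ℓ).card))), n * m := by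
          rw [Finset.sum_const, smul_eq_mul, Nat.mul_comm]
      _ ≤ ∑ ℓ ∈ (Finset.univ.filter
          (fun ℓ : Fin m → Fin n => ¬(m ≤ 2 * (compSet T ℓ).card))), 4 * (QL T ℓ).length := by
          apply Finset.sum_le_sum
          intro ℓ hℓ
          rw [Finset.mem_filter] at hℓ
          rcases dichotomy hn hm hk1 hk2 T hT ℓ with h | h
          · exact h
          · exact absurd h hℓ.2
      _ ≤ ∑ ℓ : Fin m → Fin n, 4 * (QL T ℓ).length :=
          Finset.sum_le_sum_of_subset (Finset.filter_subset _ _)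
      _ = 4 * ∑ ℓ : Fin m → Fin n, (QL T ℓ).length := by rw [Finset.mul_sum]
  -- combine
  have hfinal : n * m * n ^ m = n * m * S.card + n * m * (Finset.univ.filter
      (fun ℓ : Fin m → Fin n => ¬(m ≤ 2 * (compSet T ℓ).card))).card := by
    rw [← Nat.mul_add, hcards]
  rw [hfinal]
  have : n * m * S.card = n * (m * S.card) := by ring
  rw [this]
  linarith
/-! ### Final assembly -/

theorem statement12' :
    ∃ c : ℝ, 0 < c ∧ ∃ N : ℕ, ∀ n m k : ℕ, N ≤ n → N ≤ m → 1 ≤ k → 2 * k < m →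
      ENNReal.ofReal (c * n * m) ≤ R0query (hFun k n m) := by
  refine ⟨1/100, by norm_num, 100, ?_⟩
  intro n m k hn hm hk1 hk2
  rw [R0query]
  refine le_iInf₂ fun μ hμ => ?_
  set SUP := ⨆ x : Fin n × Fin m → PSym n m (Fin n × Fin m), expCost μ x with hSUP
  -- upper bound on the average over the hard inputs
  have hup : ∑ ℓ : Fin m → Fin n, expCost μ (xhard n m (Fin n × Fin m) ℓ)
      ≤ (n ^ m : ℕ) * SUP := by
    calc ∑ ℓ : Fin m → Fin n, expCost μ (xhard n m (Fin n × Fin m) ℓ)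
        ≤ ∑ _ℓ : Fin m → Fin n, SUP :=
          Finset.sum_le_sum fun ℓ _ => le_iSup _ (xhard n m (Fin n × Fin m) ℓ)
      _ = (Finset.univ : Finset (Fin m → Fin n)).card • SUP := by rw [Finset.sum_const]
      _ = (n ^ m : ℕ) * SUP := by
          rw [Finset.card_univ, Fintype.card_fun, Fintype.card_fin, Fintype.card_fin,
            nsmul_eq_mul]
  -- exchange sums
  have hex : ∑ ℓ : Fin m → Fin n, expCost μ (xhard n m (Fin n × Fin m) ℓ)
      = ∑' T, μ T * ((∑ ℓ : Fin m → Fin n, (QL T ℓ).length : ℕ) : ℝ≥0∞) := by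
    calc ∑ ℓ : Fin m → Fin n, expCost μ (xhard n m (Fin n × Fin m) ℓ)
        = ∑ ℓ : Fin m → Fin n, ∑' T, μ T * ((T.cost (xhard n m (Fin n × Fin m) ℓ) : ℕ) : ℝ≥0∞) :=
          rfl
      _ = ∑' T, ∑ ℓ : Fin m → Fin n, μ T * ((T.cost (xhard n m (Fin n × Fin m) ℓ) : ℕ) : ℝ≥0∞) :=
          (Summable.tsum_finsetSum fun _ _ => ENNReal.summable).symm
      _ = ∑' T, μ T * ((∑ ℓ : Fin m → Fin n, (QL T ℓ).length : ℕ) : ℝ≥0∞) := by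
          apply tsum_congr
          intro T
          rw [← Finset.mul_sum, Nat.cast_sum]
          rfl
  -- the per-tree lower bound
  have hlow : ((n * m * n ^ m : ℕ) : ℝ≥0∞)
      ≤ 12 * ∑ ℓ : Fin m → Fin n, expCost μ (xhard n m (Fin n × Fin m) ℓ) := by
    rw [hex]
    calc ((n * m * n ^ m : ℕ) : ℝ≥0∞)
        = ∑' T : DTree (Fin n × Fin m) (PSym n m (Fin n × Fin m)),
            μ T * ((n * m * n ^ m : ℕ) : ℝ≥0∞) := by
          rw [ENNReal.tsum_mul_right, μ.tsum_coe, one_mul]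
      _ ≤ ∑' T, μ T * ((12 * ∑ ℓ : Fin m → Fin n, (QL T ℓ).length : ℕ) : ℝ≥0∞) := by
          apply ENNReal.tsum_le_tsum
          intro T
          by_cases hT : μ T = 0
          · rw [hT, zero_mul, zero_mul]
          · have hTs : T ∈ μ.support := (PMF.mem_support_iff μ T).mpr hT
            have := total_bound hn hm hk1 hk2 T (hμ T hTs)
            exact mul_le_mul_right (Nat.cast_le.mpr this) _
      _ = 12 * ∑' T, μ T * ((∑ ℓ : Fin m → Fin n, (QL T ℓ).length : ℕ) : ℝ≥0∞) := by
          rw [← ENNReal.tsum_mul_left]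
          apply tsum_congr
          intro T
          rw [Nat.cast_mul]
          push_cast
          ring
  -- combine and cancel
  have hcomb : ((n * m : ℕ) : ℝ≥0∞) * ((n ^ m : ℕ) : ℝ≥0∞) ≤ (12 * SUP) * ((n ^ m : ℕ) : ℝ≥0∞) := by
    calc ((n * m : ℕ) : ℝ≥0∞) * ((n ^ m : ℕ) : ℝ≥0∞)
        = ((n * m * n ^ m : ℕ) : ℝ≥0∞) := by push_cast; ring
      _ ≤ 12 * ∑ ℓ : Fin m → Fin n, expCost μ (xhard n m (Fin n × Fin m) ℓ) := hlow
      _ ≤ 12 * ((n ^ m : ℕ) * SUP) := mul_le_mul_right hup 12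
      _ = (12 * SUP) * ((n ^ m : ℕ) : ℝ≥0∞) := by ring
  have hB0 : ((n ^ m : ℕ) : ℝ≥0∞) ≠ 0 := by
    simp only [ne_eq, Nat.cast_eq_zero]
    positivity
  have hBt : ((n ^ m : ℕ) : ℝ≥0∞) ≠ ⊤ := ENNReal.natCast_ne_top _
  have hA : ((n * m : ℕ) : ℝ≥0∞) ≤ 12 * SUP :=
    (ENNReal.mul_le_mul_iff_left hB0 hBt).mp hcomb
  have h12 : (12 : ℝ≥0∞) * ENNReal.ofReal (1/100 * n * m) ≤ 12 * SUP := by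
    refine le_trans ?_ hA
    rw [← ENNReal.ofReal_natCast (n * m)]
    rw [show (12 : ℝ≥0∞) = ENNReal.ofReal 12 by norm_num]
    rw [← ENNReal.ofReal_mul (by norm_num)]
    apply ENNReal.ofReal_le_ofReal
    push_cast
    nlinarith [mul_nonneg (Nat.cast_nonneg (α := ℝ) n) (Nat.cast_nonneg (α := ℝ) m)]
  exact (ENNReal.mul_le_mul_iff_right (by norm_num) (by norm_num)).mp h12
/-- `R0(h_{k,n,m}) = Ω(n·m)` for `1 ≤ k < m/2`. -/
theorem statement12 :
    ∃ c : ℝ, 0 < c ∧ ∃ N : ℕ, ∀ n m k : ℕ, N ≤ n → N ≤ m → 1 ≤ k → 2 * k < m →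
      ENNReal.ofReal (c * n * m) ≤ R0query (hFun k n m) :=
  statement12'
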